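/- Algebraic Poincaré formula in the model ring: in (∧ L) ⊗ (∧ M) with bases (c_k), (v_k), dual bases (c_k^*), (v_k^*), and the cap product ((α⊗β) ⌢ (x⊗y)) = (α ⌟ x) ⊗ (β ⌟ y), capping the class Q^{g−d}/(g−d)! of the theta divisor, where Q = Σ_k c_k^* ⊗ v_k^*, against the fundamental class (c_1∧⋯∧c_g) ⊗ (v_1∧⋯∧v_g) yields Σ_{|I|=d} (∧_{k∈I} c_k) ⊗ (∧_{k∈I} v_k). -/

import Mathlib

open ExteriorAlgebra TensorProduct

/-- The wedge `∧_{k ∈ I} c k` (indices in increasing order) in the exterior algebra. -/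
noncomputable def wedgeSet {g : ℕ} {L : Type*} [AddCommGroup L] [Module ℤ L]
    (c : Fin g → L) (I : Finset (Fin g)) : ExteriorAlgebra ℤ L :=
  ((I.sort (· ≤ ·)).map fun k => ExteriorAlgebra.ι ℤ (c k)).prod

/-- The interior product, extended to an algebra homomorphism
`∧(L^*) → End(∧L)`, via the universal property of the exterior algebra. -/
noncomputable def interiorProd (L : Type*) [AddCommGroup L] [Module ℤ L] :
    ExteriorAlgebra ℤ (Module.Dual ℤ L) →ₐ[ℤ] Module.End ℤ (ExteriorAlgebra ℤ L) :=
  ExteriorAlgebra.lift ℤ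
    ⟨CliffordAlgebra.contractLeft (Q := (0 : QuadraticForm ℤ L)),
      fun d => LinearMap.ext fun x => CliffordAlgebra.contractLeft_contractLeft d x⟩

/-- The cap product `((α⊗β) ⌢ (x⊗y)) = (α ⌟ x) ⊗ (β ⌟ y)` on `(∧L^* ⊗ ∧M^*) × (∧L ⊗ ∧M)`. -/
noncomputable def cap {L M : Type*} [AddCommGroup L] [Module ℤ L]
    [AddCommGroup M] [Module ℤ M]
    (T : ExteriorAlgebra ℤ (Module.Dual ℤ L) ⊗[ℤ] ExteriorAlgebra ℤ (Module.Dual ℤ M))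
    (z : ExteriorAlgebra ℤ L ⊗[ℤ] ExteriorAlgebra ℤ M) :
    ExteriorAlgebra ℤ L ⊗[ℤ] ExteriorAlgebra ℤ M :=
  TensorProduct.homTensorHomMap (σ₁₂ := RingHom.id ℤ) _ _ _ _
    ((Algebra.TensorProduct.map (interiorProd L) (interiorProd M)) T) z

namespace PoincareAux

section Basic
variable {g : ℕ} {L : Type*} [AddCommGroup L] [Module ℤ L]

noncomputable def wedgeList (c : Fin g → L) (l : List (Fin g)) : ExteriorAlgebra ℤ L :=
  (l.map fun k => ExteriorAlgebra.ι ℤ (c k)).prod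

lemma wedgeList_nil (c : Fin g → L) : wedgeList c [] = 1 := rfl

lemma wedgeList_cons (c : Fin g → L) (k : Fin g) (l : List (Fin g)) :
    wedgeList c (k :: l) = ExteriorAlgebra.ι ℤ (c k) * wedgeList c l := by
  simp [wedgeList]

lemma wedgeList_append (c : Fin g → L) (l l' : List (Fin g)) :
    wedgeList c (l ++ l') = wedgeList c l * wedgeList c l' := by
  simp [wedgeList]

lemma wedgeSet_eq (c : Fin g → L) (I : Finset (Fin g)) :
    wedgeSet c I = wedgeList c (I.sort (· ≤ ·)) := rfl

lemma wedgeSet_empty (c : Fin g → L) : wedgeSet c ∅ = 1 := by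
  rw [wedgeSet_eq, Finset.sort_empty, wedgeList_nil]

lemma interiorProd_ι (f : Module.Dual ℤ L) :
    interiorProd L (ExteriorAlgebra.ι ℤ f)
      = CliffordAlgebra.contractLeft (Q := (0 : QuadraticForm ℤ L)) f :=
  ExteriorAlgebra.lift_ι_apply ℤ _ _ f

/-- permutation invariance up to sign -/
lemma wedgeList_perm (c : Fin g → L) {l l' : List (Fin g)} (h : l.Perm l') :
    ∃ ε : ℤ, (ε = 1 ∨ ε = -1) ∧ wedgeList c l = ε • wedgeList c l' := by
  induction h with
  | nil => exact ⟨1, Or.inl rfl, (one_smul _ _).symm⟩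
  | cons a _ ih =>
      obtain ⟨ε, hε, he⟩ := ih
      exact ⟨ε, hε, by rw [wedgeList_cons, wedgeList_cons, he, mul_smul_comm]⟩
  | swap a b l =>
      refine ⟨-1, Or.inr rfl, ?_⟩
      rw [wedgeList_cons, wedgeList_cons, wedgeList_cons, wedgeList_cons, ← mul_assoc,
        ← mul_assoc]
      have : ExteriorAlgebra.ι ℤ (c b) * ExteriorAlgebra.ι ℤ (c a)
          = -(ExteriorAlgebra.ι ℤ (c a) * ExteriorAlgebra.ι ℤ (c b)) :=
        eq_neg_of_add_eq_zero_left (by rw [add_comm]; exact ExteriorAlgebra.ι_add_mul_swap _ _)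
      rw [this]
      simp
  | trans _ _ ih₁ ih₂ =>
      obtain ⟨ε₁, hε₁, he₁⟩ := ih₁
      obtain ⟨ε₂, hε₂, he₂⟩ := ih₂
      refine ⟨ε₁ * ε₂, ?_, by rw [he₁, he₂, smul_smul]⟩
      rcases hε₁ with rfl | rfl <;> rcases hε₂ with rfl | rfl <;> simp

end Basic

section Contract
variable {g : ℕ} {L : Type*} [AddCommGroup L] [Module ℤ L] (b : Module.Basis (Fin g) ℤ L)

local notation "ctr" => CliffordAlgebra.contractLeft (Q := (0 : QuadraticForm ℤ L))

lemma coord_basis (k j : Fin g) : b.coord k (b j) = if j = k then 1 else 0 := by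
  simp [Module.Basis.coord_apply, Finsupp.single_apply]

lemma ctr_wedgeList_of_not_mem {k : Fin g} {l : List (Fin g)} (h : k ∉ l) :
    ctr (b.coord k) (wedgeList b l) = 0 := by
  induction l with
  | nil => rw [wedgeList_nil]; exact CliffordAlgebra.contractLeft_one _ _
  | cons j t ih =>
      rw [wedgeList_cons, CliffordAlgebra.contractLeft_ι_mul,
        ih (fun hm => h (List.mem_cons_of_mem _ hm)), coord_basis]
      have : j ≠ k := fun hjk => h (hjk ▸ (List.mem_cons_self (a := j) (l := t)))
      rw [if_neg this]
      simp
      exact zero_smul _ _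

lemma ctr_wedgeList_of_mem {k : Fin g} {l : List (Fin g)} (hnd : l.Nodup) (h : k ∈ l) :
    ctr (b.coord k) (wedgeList b l)
      = ((-1 : ℤ)) ^ (l.idxOf k) • wedgeList b (l.erase k) := by
  induction l with
  | nil => exact absurd h (List.not_mem_nil (a := k))
  | cons j t ih =>
      rw [wedgeList_cons, CliffordAlgebra.contractLeft_ι_mul, coord_basis]
      by_cases hjk : j = k
      · subst hjk
        have hkt : j ∉ t := (List.nodup_cons.mp hnd).1
        rw [ctr_wedgeList_of_not_mem b hkt, if_pos rfl]
        simp [List.idxOf_cons_self, List.erase_cons_head]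
        exact one_smul _ _
      · have hkt : k ∈ t := by
          rcases List.mem_cons.mp h with h' | h'
          · exact absurd h'.symm hjk
          · exact h'
        rw [if_neg hjk, ih (List.nodup_cons.mp hnd).2 hkt]
        rw [List.idxOf_cons_ne _ (by exact fun h' => hjk h'), List.erase_cons_tail]
        · rw [wedgeList_cons, mul_smul_comm]
          simp [pow_succ, mul_comm]
          exact zero_smul _ _
        · simp [hjk]
end Contract

end PoincareAux
namespace PoincareAux
variable {g : ℕ}

/-- remove the elements of `s` (from the right) from `t` -/
def rem : List (Fin g) → List (Fin g) → List (Fin g)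
  | [], t => t
  | k :: s, t => (rem s t).erase k

/-- the sign obtained when contracting a wedge indexed by `t` by the duals indexed by `s` -/
def csign : List (Fin g) → List (Fin g) → ℤ
  | [], _ => 1
  | k :: s, t => if k ∈ rem s t then ((-1 : ℤ)) ^ ((rem s t).idxOf k) * csign s t else 0

lemma rem_subset {s t : List (Fin g)} {a : Fin g} (h : a ∈ rem s t) : a ∈ t := by
  induction s with
  | nil => exact h
  | cons k s ih => exact ih (List.mem_of_mem_erase h)

lemma mem_rem {s t : List (Fin g)} {a : Fin g} (ht : a ∈ t) (hs : a ∉ s) : a ∈ rem s t := by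
  induction s with
  | nil => exact ht
  | cons k s ih =>
      have hak : a ≠ k := fun h => hs (h ▸ (List.mem_cons_self (a := k) (l := s)))
      exact (List.mem_erase_of_ne hak).mpr (ih fun h => hs (List.mem_cons_of_mem _ h))

lemma rem_nodup {t : List (Fin g)} (ht : t.Nodup) (s : List (Fin g)) : (rem s t).Nodup := by
  induction s with
  | nil => exact ht
  | cons k s ih => exact ih.erase k

lemma rem_cons_of_not_mem {s : List (Fin g)} {k : Fin g} (h : k ∉ s) (t : List (Fin g)) :
    rem s (k :: t) = k :: rem s t := by
  induction s with
  | nil => rfl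
  | cons j s ih =>
      have hjk : j ≠ k := fun hh => h (hh ▸ (List.mem_cons_self (a := j) (l := s)))
      rw [rem, ih (fun hh => h (List.mem_cons_of_mem _ hh)), List.erase_cons_tail
        (by simpa using hjk.symm), ← rem]

lemma rem_self {s : List (Fin g)} (h : s.Nodup) : rem s s = [] := by
  induction s with
  | nil => rfl
  | cons k s ih =>
      obtain ⟨hk, hs⟩ := List.nodup_cons.mp h
      rw [rem, rem_cons_of_not_mem hk, List.erase_cons_head, ih hs]

lemma csign_unit {s t : List (Fin g)} (hs : s.Nodup) (hst : ∀ a ∈ s, a ∈ t) :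
    csign s t = 1 ∨ csign s t = -1 := by
  induction s with
  | nil => exact Or.inl rfl
  | cons k s ih =>
      obtain ⟨hk, hs'⟩ := List.nodup_cons.mp hs
      have hkr : k ∈ rem s t := mem_rem (hst k (List.mem_cons_self (a := k) (l := s))) hk
      have hpow : ((-1 : ℤ)) ^ ((rem s t).idxOf k) = 1
          ∨ ((-1 : ℤ)) ^ ((rem s t).idxOf k) = -1 := by
        rcases Nat.even_or_odd ((rem s t).idxOf k) with he | ho
        · exact Or.inl he.neg_one_pow
        · exact Or.inr ho.neg_one_pow
      rcases ih hs' (fun a ha => hst a (List.mem_cons_of_mem _ ha)) with h | h <;>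
        rcases hpow with h' | h' <;> rw [csign, if_pos hkr, h, h'] <;> simp

lemma csign_eq_zero {s t : List (Fin g)} {k : Fin g} (hk : k ∈ s) (hkt : k ∉ t) :
    csign s t = 0 := by
  induction s with
  | nil => exact absurd hk (List.not_mem_nil (a := k))
  | cons j s ih =>
      rcases List.mem_cons.mp hk with rfl | hk'
      · have : k ∉ rem s t := fun h => hkt (rem_subset h)
        rw [csign, if_neg this]
      · rw [csign, ih hk']
        split <;> simp

end PoincareAux

namespace PoincareAux
section Iterate
variable {g : ℕ} {L : Type*} [AddCommGroup L] [Module ℤ L] (b : Module.Basis (Fin g) ℤ L)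

local notation "ctr" => CliffordAlgebra.contractLeft (Q := (0 : QuadraticForm ℤ L))

/-- the dual wedge as an operator list -/
noncomputable def dualWedge (b : Module.Basis (Fin g) ℤ L) (s : List (Fin g)) :
    ExteriorAlgebra ℤ (Module.Dual ℤ L) :=
  (s.map fun k => ExteriorAlgebra.ι ℤ (b.coord k : Module.Dual ℤ L)).prod

lemma interiorProd_dualWedge {t : List (Fin g)} (ht : t.Nodup) (s : List (Fin g)) :
    interiorProd L (dualWedge b s) (wedgeList b t) = csign s t • wedgeList b (rem s t) := by
  induction s with
  | nil =>
      simp only [dualWedge, List.map_nil, List.prod_nil, map_one, csign, rem, one_smul]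
      rfl
  | cons k s ih =>
      have : dualWedge b (k :: s) = ExteriorAlgebra.ι ℤ (b.coord k) * dualWedge b s := by
        simp [dualWedge]
      rw [this, map_mul, Module.End.mul_apply, ih, map_smul, interiorProd_ι, rem, csign]
      by_cases hk : k ∈ rem s t
      · rw [if_pos hk]
        erw [ctr_wedgeList_of_mem b (rem_nodup ht s) hk]
        rw [smul_smul, mul_comm]
      · rw [if_neg hk]
        erw [ctr_wedgeList_of_not_mem b hk]
        rw [smul_zero, zero_smul]

lemma algebraMapInv_wedgeList (l : List (Fin g)) :
    (algebraMapInv : ExteriorAlgebra ℤ L →ₐ[ℤ] ℤ) (wedgeList b l)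
      = if l = [] then 1 else 0 := by
  cases l with
  | nil => rw [wedgeList_nil, map_one]; rfl
  | cons k t =>
      rw [wedgeList_cons, map_mul, if_neg (List.cons_ne_nil k t)]
      have : (algebraMapInv : ExteriorAlgebra ℤ L →ₐ[ℤ] ℤ) (ExteriorAlgebra.ι ℤ (b k)) = 0 := by
        simp [algebraMapInv]
      rw [this, zero_mul]

end Iterate
end PoincareAux

namespace PoincareAux
section BasisSec
variable {g : ℕ} {L : Type*} [AddCommGroup L] [Module ℤ L] (b : Module.Basis (Fin g) ℤ L)

lemma wedgeSet_sdiff (I J : Finset (Fin g)) :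
    wedgeList b (rem (J.sort (· ≤ ·)) (I.sort (· ≤ ·))) = wedgeList b (rem (J.sort (· ≤ ·)) (I.sort (· ≤ ·))) := rfl

/-- evaluation functional -/
noncomputable def evalAt (I : Finset (Fin g)) : ExteriorAlgebra ℤ L →ₗ[ℤ] ℤ :=
  (algebraMapInv : ExteriorAlgebra ℤ L →ₐ[ℤ] ℤ).toLinearMap ∘ₗ
    (interiorProd L (dualWedge b (I.sort (· ≤ ·))))

lemma evalAt_self (I : Finset (Fin g)) :
    evalAt b I (wedgeSet b I) = csign (I.sort (· ≤ ·)) (I.sort (· ≤ ·))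
      ∧ (evalAt b I (wedgeSet b I) = 1 ∨ evalAt b I (wedgeSet b I) = -1) := by
  have h := interiorProd_dualWedge b (Finset.sort_nodup I (· ≤ ·)) (I.sort (· ≤ ·))
  have h2 : evalAt b I (wedgeSet b I) = csign (I.sort (· ≤ ·)) (I.sort (· ≤ ·)) := by
    rw [evalAt]
    erw [LinearMap.comp_apply]
    rw [wedgeSet_eq]
    erw [h]
    rw [rem_self (Finset.sort_nodup I (· ≤ ·)),
      map_smul, AlgHom.toLinearMap_apply, algebraMapInv_wedgeList b, if_pos rfl, smul_eq_mul, mul_one]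
  exact ⟨h2, h2 ▸ csign_unit (Finset.sort_nodup I (· ≤ ·)) (fun a ha => ha)⟩

lemma evalAt_ne (I J : Finset (Fin g)) (hne : J ≠ I) : evalAt b I (wedgeSet b J) = 0 := by
  have h := interiorProd_dualWedge b (Finset.sort_nodup J (· ≤ ·)) (I.sort (· ≤ ·))
  rw [evalAt]
  erw [LinearMap.comp_apply]
  rw [wedgeSet_eq]
  erw [h]
  rw [map_smul, AlgHom.toLinearMap_apply, algebraMapInv_wedgeList b]
  by_cases hIJ : I ⊆ J
  · have : ∃ a, a ∈ J ∧ a ∉ I := by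
      by_contra hc
      push_neg at hc
      exact hne (Finset.Subset.antisymm hc hIJ)
    obtain ⟨a, haJ, haI⟩ := this
    have : a ∈ rem (I.sort (· ≤ ·)) (J.sort (· ≤ ·)) :=
      mem_rem ((Finset.mem_sort (α := Fin g) (· ≤ ·)).mpr haJ) (fun h => haI ((Finset.mem_sort (α := Fin g) (· ≤ ·)).mp h))
    rw [if_neg (fun he => by rw [he] at this; exact List.not_mem_nil this)]
    simp
  · obtain ⟨k, hkI, hkJ⟩ := Finset.not_subset.mp hIJ
    rw [csign_eq_zero ((Finset.mem_sort (α := Fin g) (· ≤ ·)).mpr hkI)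
      (fun h => hkJ ((Finset.mem_sort (α := Fin g) (· ≤ ·)).mp h))]
    simp

lemma wedgeSet_linearIndependent :
    LinearIndependent ℤ (fun I : Finset (Fin g) => wedgeSet b I) := by
  rw [Fintype.linearIndependent_iff]
  intro f hf I
  have h0 : evalAt b I (∑ J : Finset (Fin g), f J • wedgeSet b J) = 0 := by rw [hf, map_zero]
  rw [map_sum] at h0
  simp_rw [map_smul] at h0
  rw [Finset.sum_eq_single I (fun J _ hJ => by rw [evalAt_ne b I J hJ, smul_zero])
    (fun h => absurd (Finset.mem_univ I) h)] at h0
  rcases (evalAt_self b I).2 with h | h <;> rw [h] at h0 <;> simpa using h0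
end BasisSec
end PoincareAux

namespace PoincareAux
section SpanSec
variable {g : ℕ} {L : Type*} [AddCommGroup L] [Module ℤ L] (b : Module.Basis (Fin g) ℤ L)

/-- the span of the basis wedges -/
noncomputable def wedgeSpan : Submodule ℤ (ExteriorAlgebra ℤ L) :=
  Submodule.span ℤ (Set.range fun I : Finset (Fin g) => wedgeSet b I)

lemma wedgeSet_mem_span (I : Finset (Fin g)) : wedgeSet b I ∈ wedgeSpan b :=
  Submodule.subset_span ⟨I, rfl⟩

lemma wedgeSet_insert {k : Fin g} {J : Finset (Fin g)} (hk : k ∉ J) :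
    ∃ ε : ℤ, (ε = 1 ∨ ε = -1) ∧
      wedgeSet b (insert k J) = ε • (ExteriorAlgebra.ι ℤ (b k) * wedgeSet b J) := by
  have hperm : ((insert k J).sort (· ≤ ·)).Perm (k :: J.sort (· ≤ ·)) := by
    refine ((Finset.sort_perm_toList _ _).trans ?_).trans
      (List.Perm.cons k (Finset.sort_perm_toList J (· ≤ ·)).symm)
    exact Finset.toList_insert hk
  obtain ⟨ε, hε, he⟩ := wedgeList_perm b hperm
  exact ⟨ε, hε, by rw [wedgeSet_eq, he, wedgeList_cons, wedgeSet_eq]⟩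

lemma ι_mul_wedgeSet_mem (k : Fin g) (I : Finset (Fin g)) :
    ExteriorAlgebra.ι ℤ (b k) * wedgeSet b I ∈ wedgeSpan b := by
  by_cases hk : k ∈ I
  · obtain ⟨ε, hε, he⟩ := wedgeSet_insert b (Finset.notMem_erase k I)
    rw [Finset.insert_erase hk] at he
    rw [he, mul_smul_comm, ← mul_assoc, ExteriorAlgebra.ι_sq_zero, zero_mul, smul_zero]
    exact Submodule.zero_mem _
  · obtain ⟨ε, hε, he⟩ := wedgeSet_insert b hk
    have : ExteriorAlgebra.ι ℤ (b k) * wedgeSet b I = ε • wedgeSet b (insert k I) := by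
      rw [he, smul_smul]
      rcases hε with rfl | rfl <;> simp
    rw [this]
    exact Submodule.smul_mem _ _ (wedgeSet_mem_span b _)

lemma ι_mul_mem {x : ExteriorAlgebra ℤ L} (k : Fin g) (hx : x ∈ wedgeSpan b) :
    ExteriorAlgebra.ι ℤ (b k) * x ∈ wedgeSpan b := by
  induction hx using Submodule.span_induction with
  | mem x hx => obtain ⟨I, rfl⟩ := hx; exact ι_mul_wedgeSet_mem b k I
  | zero => rw [mul_zero]; exact Submodule.zero_mem _
  | add x y _ _ hx hy => rw [mul_add]; exact Submodule.add_mem _ hx hy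
  | smul r x _ hx => rw [mul_smul_comm]; exact Submodule.smul_mem _ _ hx

lemma wedgeList_mem_span (l : List (Fin g)) : wedgeList b l ∈ wedgeSpan b := by
  induction l with
  | nil => rw [wedgeList_nil, ← wedgeSet_empty (b : Fin g → L)]; exact wedgeSet_mem_span b ∅
  | cons k t ih => rw [wedgeList_cons]; exact ι_mul_mem b k ih

lemma mul_mem_span {x y : ExteriorAlgebra ℤ L} (hx : x ∈ wedgeSpan b) (hy : y ∈ wedgeSpan b) :
    x * y ∈ wedgeSpan b := by
  induction hx using Submodule.span_induction with
  | mem x hx =>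
      obtain ⟨I, rfl⟩ := hx
      induction hy using Submodule.span_induction with
      | mem y hy =>
          obtain ⟨J, rfl⟩ := hy
          show wedgeSet (⇑b) I * wedgeSet (⇑b) J ∈ wedgeSpan b
          rw [wedgeSet_eq, wedgeSet_eq, ← wedgeList_append]
          exact wedgeList_mem_span b _
      | zero => rw [mul_zero]; exact Submodule.zero_mem _
      | add y z _ _ h1 h2 => rw [mul_add]; exact Submodule.add_mem _ h1 h2
      | smul r y _ h1 => rw [mul_smul_comm]; exact Submodule.smul_mem _ _ h1
  | zero => rw [zero_mul]; exact Submodule.zero_mem _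
  | add x z _ _ h1 h2 => rw [add_mul]; exact Submodule.add_mem _ h1 h2
  | smul r x _ h1 => rw [smul_mul_assoc]; exact Submodule.smul_mem _ _ h1

lemma wedgeSpan_eq_top : wedgeSpan b = ⊤ := by
  rw [eq_top_iff]
  rintro x -
  induction x using ExteriorAlgebra.induction with
  | algebraMap r =>
      rw [Algebra.algebraMap_eq_smul_one, ← wedgeSet_empty (b : Fin g → L)]
      exact Submodule.smul_mem _ _ (wedgeSet_mem_span b ∅)
  | ι m =>
      rw [← b.sum_repr m, map_sum]
      simp_rw [LinearMap.map_smul]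
      refine Submodule.sum_mem _ fun k _ => Submodule.smul_mem _ _ ?_
      have : ExteriorAlgebra.ι ℤ (b k) = wedgeSet b {k} := by
        rw [wedgeSet_eq, Finset.sort_singleton]
        simp [wedgeList]
      rw [this]; exact wedgeSet_mem_span b _
  | mul x y hx hy => exact mul_mem_span b hx hy
  | add x y hx hy => exact Submodule.add_mem _ hx hy

/-- basis of the exterior algebra -/
noncomputable def exteriorBasis : Module.Basis (Finset (Fin g)) ℤ (ExteriorAlgebra ℤ L) :=
  Module.Basis.mk (wedgeSet_linearIndependent b) (wedgeSpan_eq_top b).ge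

lemma exteriorFree (b : Module.Basis (Fin g) ℤ L) : Module.Free ℤ (ExteriorAlgebra ℤ L) :=
  Module.Free.of_basis (exteriorBasis b)
end SpanSec
end PoincareAux

namespace PoincareAux
section Tensor
variable {g : ℕ} {A : Type*} [Ring A]

/-- product of a list of pure tensors -/
lemma prod_map_tmul {R : Type*} [CommRing R] {A B : Type*} [Ring A] [Ring B]
    [Algebra R A] [Algebra R B] (f : Fin g → A) (h : Fin g → B) (l : List (Fin g)) :
    (l.map fun k => f k ⊗ₜ[R] h k).prod = (l.map f).prod ⊗ₜ[R] (l.map h).prod := by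
  induction l with
  | nil => simp [Algebra.TensorProduct.one_def]
  | cons k t ih => simp [ih, Algebra.TensorProduct.tmul_mul_tmul]

variable (x : Fin g → A)
  (hcomm : ∀ i j, Commute (x i) (x j)) (hsq : ∀ k, x k * x k = 0)

/-- the product over a finset -/
noncomputable def setProd (S : Finset (Fin g)) : A := ((S.sort (· ≤ ·)).map x).prod

include hcomm in
lemma prod_perm {l l' : List (Fin g)} (h : l.Perm l') :
    (l.map x).prod = (l'.map x).prod :=
  (h.map x).prod_eq' (List.pairwise_of_forall_mem_list fun a ha b hb => by
    obtain ⟨i, _, rfl⟩ := List.mem_map.mp ha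
    obtain ⟨j, _, rfl⟩ := List.mem_map.mp hb
    exact hcomm i j)

lemma sort_insert_perm {k : Fin g} {S : Finset (Fin g)} (hk : k ∉ S) :
    ((insert k S).sort (· ≤ ·)).Perm (k :: S.sort (· ≤ ·)) :=
  ((Finset.sort_perm_toList _ _).trans (Finset.toList_insert hk)).trans
    (List.Perm.cons k (Finset.sort_perm_toList S (· ≤ ·)).symm)

include hcomm hsq in
lemma setProd_mul (S : Finset (Fin g)) (k : Fin g) :
    setProd x S * x k = if k ∈ S then 0 else setProd x (insert k S) := by
  by_cases hk : k ∈ S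
  · rw [if_pos hk]
    have hperm : (S.sort (· ≤ ·)).Perm (k :: (S.erase k).sort (· ≤ ·)) := by
      have := sort_insert_perm (k := k) (S := S.erase k) (Finset.notMem_erase k S)
      rwa [Finset.insert_erase hk] at this
    rw [setProd, prod_perm x hcomm hperm]
    have hcW : Commute (x k) (((S.erase k).sort (· ≤ ·)).map x).prod :=
      Commute.list_prod_right _ _ fun y hy => by
        obtain ⟨j, _, rfl⟩ := List.mem_map.mp hy
        exact hcomm k j
    rw [List.map_cons, List.prod_cons, mul_assoc, ← hcW.eq, ← mul_assoc, hsq k, zero_mul]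
  · rw [if_neg hk, setProd, setProd, prod_perm x hcomm (sort_insert_perm hk),
      List.map_cons, List.prod_cons]
    exact (Commute.list_prod_right _ _ fun y hy => by
      obtain ⟨j, _, rfl⟩ := List.mem_map.mp hy
      exact hcomm k j).eq.symm

include hcomm hsq in
lemma sum_pow_eq (n : ℕ) :
    (∑ k : Fin g, x k) ^ n
      = n.factorial • ∑ S ∈ Finset.powersetCard n (Finset.univ : Finset (Fin g)),
          setProd x S := by
  induction n with
  | zero =>
      simp [Finset.powersetCard_zero]
      rw [setProd]
      simp [Finset.sort_empty]
  | succ n ih =>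
      rw [pow_succ, ih, smul_mul_assoc, Finset.sum_mul]
      have h1 : ∀ S ∈ Finset.powersetCard n (Finset.univ : Finset (Fin g)),
          setProd x S * (∑ k : Fin g, x k) = ∑ k ∈ Sᶜ, setProd x (insert k S) := by
        intro S _
        rw [Finset.mul_sum]
        calc ∑ k : Fin g, setProd x S * x k
            = ∑ k : Fin g, if k ∈ Sᶜ then setProd x (insert k S) else 0 := by
              refine Finset.sum_congr rfl fun k _ => ?_
              rw [setProd_mul x hcomm hsq S k]
              by_cases hk : k ∈ S <;> simp [hk]
          _ = ∑ k ∈ Finset.univ ∩ Sᶜ, setProd x (insert k S) := Finset.sum_ite_mem _ _ _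
          _ = ∑ k ∈ Sᶜ, setProd x (insert k S) := by rw [Finset.univ_inter]
      rw [Finset.sum_congr rfl h1]
      have h2 : ∑ S ∈ Finset.powersetCard n (Finset.univ : Finset (Fin g)),
            ∑ k ∈ Sᶜ, setProd x (insert k S)
          = ∑ T ∈ Finset.powersetCard (n + 1) (Finset.univ : Finset (Fin g)),
            ∑ _k ∈ T, setProd x T := by
        rw [Finset.sum_sigma', Finset.sum_sigma']
        refine Finset.sum_nbij' (i := fun p => ⟨insert p.2 p.1, p.2⟩)
          (j := fun p => ⟨p.1.erase p.2, p.2⟩) ?_ ?_ ?_ ?_ ?_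
        · rintro ⟨S, k⟩ hp
          simp only [Finset.mem_sigma, Finset.mem_powersetCard_univ, Finset.mem_compl] at hp ⊢
          exact ⟨by rw [Finset.card_insert_of_notMem hp.2, hp.1], Finset.mem_insert_self _ _⟩
        · rintro ⟨T, k⟩ hp
          simp only [Finset.mem_sigma, Finset.mem_powersetCard_univ, Finset.mem_compl] at hp ⊢
          exact ⟨by rw [Finset.card_erase_of_mem hp.2, hp.1]; rfl, Finset.notMem_erase _ _⟩
        · rintro ⟨S, k⟩ hp
          simp only [Finset.mem_sigma, Finset.mem_powersetCard_univ, Finset.mem_compl] at hp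
          simp [Finset.erase_insert hp.2]
        · rintro ⟨T, k⟩ hp
          simp only [Finset.mem_sigma, Finset.mem_powersetCard_univ, Finset.mem_compl] at hp
          simp [Finset.insert_erase hp.2]
        · rintro ⟨S, k⟩ hp
          rfl
      rw [h2]
      have h3 : ∀ T ∈ Finset.powersetCard (n + 1) (Finset.univ : Finset (Fin g)),
          ∑ _k ∈ T, setProd x T = (n + 1) • setProd x T := by
        intro T hT
        rw [Finset.sum_const, Finset.mem_powersetCard_univ.mp hT]
      rw [Finset.sum_congr rfl h3, ← Finset.smul_sum, smul_smul, Nat.factorial_succ,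
        Nat.mul_comm]
end Tensor
end PoincareAux


namespace PoincareAux

section RemSort
variable {g : ℕ}

lemma not_mem_of_mem_rem {s t : List (Fin g)} (ht : t.Nodup) {a : Fin g}
    (h : a ∈ rem s t) : a ∉ s := by
  induction s with
  | nil => exact List.not_mem_nil (a := a)
  | cons k s ih =>
      have hnd : (rem s t).Nodup := rem_nodup ht s
      obtain ⟨hak, har⟩ := hnd.mem_erase_iff.mp h
      intro hmem
      rcases List.mem_cons.mp hmem with rfl | hmem'
      · exact hak rfl
      · exact ih har hmem'

lemma rem_sublist (s t : List (Fin g)) : (rem s t).Sublist t := by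
  induction s with
  | nil => exact List.Sublist.refl t
  | cons k s ih => exact (List.erase_sublist (a := k) (l := rem s t)).trans ih

lemma rem_sort_univ (S : Finset (Fin g)) :
    rem (S.sort (· ≤ ·)) ((Finset.univ : Finset (Fin g)).sort (· ≤ ·))
      = Sᶜ.sort (· ≤ ·) := by
  set s := S.sort (· ≤ ·)
  set t := (Finset.univ : Finset (Fin g)).sort (· ≤ ·)
  have ht : t.Nodup := Finset.sort_nodup _ _
  have h1 : (rem s t).Nodup := rem_nodup ht s
  have h2 : (Sᶜ.sort (· ≤ ·)).Nodup := Finset.sort_nodup _ _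
  have hperm : (rem s t).Perm (Sᶜ.sort (· ≤ ·)) := by
    refine List.perm_of_nodup_nodup_toFinset_eq h1 h2 ?_
    ext a
    simp only [List.mem_toFinset]
    constructor
    · intro h
      rw [Finset.mem_sort, Finset.mem_compl]
      exact fun hmem => not_mem_of_mem_rem ht h ((Finset.mem_sort _).mpr hmem)
    · intro h
      rw [Finset.mem_sort, Finset.mem_compl] at h
      exact mem_rem ((Finset.mem_sort _).mpr (Finset.mem_univ a))
        (fun hmem => h ((Finset.mem_sort _).mp hmem))
  exact hperm.eq_of_pairwise'
    ((Finset.pairwise_sort _ _).sublist (rem_sublist s t)) (Finset.pairwise_sort _ _)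

end RemSort

section Cap
variable {L M : Type*} [AddCommGroup L] [Module ℤ L] [AddCommGroup M] [Module ℤ M]

lemma cap_smul (m : ℤ) (T : ExteriorAlgebra ℤ (Module.Dual ℤ L) ⊗[ℤ] ExteriorAlgebra ℤ (Module.Dual ℤ M))
    (z : ExteriorAlgebra ℤ L ⊗[ℤ] ExteriorAlgebra ℤ M) :
    cap (m • T) z = m • cap T z := by
  have h1 : (Algebra.TensorProduct.map (interiorProd L) (interiorProd M)) (m • T)
      = m • (Algebra.TensorProduct.map (interiorProd L) (interiorProd M)) T := by
    simpa using
      ((Algebra.TensorProduct.map (interiorProd L) (interiorProd M)).toLinearMap).map_smul m T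
  unfold cap
  rw [h1, map_smul, LinearMap.smul_apply]

lemma cap_nsmul (m : ℕ) (T : ExteriorAlgebra ℤ (Module.Dual ℤ L) ⊗[ℤ] ExteriorAlgebra ℤ (Module.Dual ℤ M))
    (z : ExteriorAlgebra ℤ L ⊗[ℤ] ExteriorAlgebra ℤ M) :
    cap (m • T) z = m • cap T z := by
  rw [← Nat.cast_smul_eq_nsmul (R := ℤ), ← Nat.cast_smul_eq_nsmul (R := ℤ), cap_smul]

lemma cap_sum {ι : Type*} (s : Finset ι)
    (f : ι → ExteriorAlgebra ℤ (Module.Dual ℤ L) ⊗[ℤ] ExteriorAlgebra ℤ (Module.Dual ℤ M))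
    (z : ExteriorAlgebra ℤ L ⊗[ℤ] ExteriorAlgebra ℤ M) :
    cap (∑ i ∈ s, f i) z = ∑ i ∈ s, cap (f i) z := by
  unfold cap
  rw [map_sum, map_sum, LinearMap.sum_apply]

lemma cap_tmul (α : ExteriorAlgebra ℤ (Module.Dual ℤ L)) (β : ExteriorAlgebra ℤ (Module.Dual ℤ M))
    (u : ExteriorAlgebra ℤ L) (w : ExteriorAlgebra ℤ M) :
    cap (α ⊗ₜ[ℤ] β) (u ⊗ₜ[ℤ] w) = (interiorProd L α u) ⊗ₜ[ℤ] (interiorProd M β w) := by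
  unfold cap
  rw [Algebra.TensorProduct.map_tmul, TensorProduct.homTensorHomMap_apply,
    TensorProduct.map_tmul]
end Cap

section Main
variable {g : ℕ} {L M : Type*} [AddCommGroup L] [Module ℤ L] [AddCommGroup M] [Module ℤ M]
  (c : Module.Basis (Fin g) ℤ L) (v : Module.Basis (Fin g) ℤ M)

lemma cap_setProd (S : Finset (Fin g)) :
    cap (setProd (fun k => (ExteriorAlgebra.ι ℤ (c.coord k : Module.Dual ℤ L))
        ⊗ₜ[ℤ] (ExteriorAlgebra.ι ℤ (v.coord k : Module.Dual ℤ M))) S)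
      (wedgeSet c Finset.univ ⊗ₜ[ℤ] wedgeSet v Finset.univ)
      = wedgeSet c Sᶜ ⊗ₜ[ℤ] wedgeSet v Sᶜ := by
  set s := S.sort (· ≤ ·) with hs
  set t := (Finset.univ : Finset (Fin g)).sort (· ≤ ·) with htdef
  have hsp : setProd (fun k => (ExteriorAlgebra.ι ℤ (c.coord k : Module.Dual ℤ L))
        ⊗ₜ[ℤ] (ExteriorAlgebra.ι ℤ (v.coord k : Module.Dual ℤ M))) S
      = dualWedge c s ⊗ₜ[ℤ] dualWedge v s := by
    rw [setProd, prod_map_tmul]; rfl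
  have ht : t.Nodup := Finset.sort_nodup _ _
  have hε : csign s t = 1 ∨ csign s t = -1 :=
    csign_unit (Finset.sort_nodup _ _) (fun a _ => (Finset.mem_sort _).mpr (Finset.mem_univ a))
  rw [hsp, cap_tmul, wedgeSet_eq, wedgeSet_eq, ← htdef,
    interiorProd_dualWedge c ht s, interiorProd_dualWedge v ht s, rem_sort_univ]
  rw [← TensorProduct.smul_tmul', TensorProduct.tmul_smul, smul_smul]
  rcases hε with h | h <;> rw [h] <;> simp [wedgeSet_eq]

set_option maxHeartbeats 1000000 in
theorem algebraic_poincare_formula'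
    (g d : ℕ) (hd : d ≤ g)
    (L M : Type*) [AddCommGroup L] [Module ℤ L] [AddCommGroup M] [Module ℤ M]
    (c : Module.Basis (Fin g) ℤ L) (v : Module.Basis (Fin g) ℤ M)
    (T : ExteriorAlgebra ℤ (Module.Dual ℤ L) ⊗[ℤ] ExteriorAlgebra ℤ (Module.Dual ℤ M))
    (hT : ((g - d).factorial : ℤ) • T
      = (∑ k : Fin g, (ExteriorAlgebra.ι ℤ (c.coord k : Module.Dual ℤ L))
          ⊗ₜ[ℤ] (ExteriorAlgebra.ι ℤ (v.coord k : Module.Dual ℤ M))) ^ (g - d)) :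
    cap T (wedgeSet c Finset.univ ⊗ₜ[ℤ] wedgeSet v Finset.univ)
      = ∑ I ∈ Finset.powersetCard d (Finset.univ : Finset (Fin g)),
          wedgeSet c I ⊗ₜ[ℤ] wedgeSet v I := by
  classical
  set n := g - d with hn
  set x : Fin g → ExteriorAlgebra ℤ (Module.Dual ℤ L) ⊗[ℤ] ExteriorAlgebra ℤ (Module.Dual ℤ M) :=
    fun k => (ExteriorAlgebra.ι ℤ (c.coord k : Module.Dual ℤ L))
      ⊗ₜ[ℤ] (ExteriorAlgebra.ι ℤ (v.coord k : Module.Dual ℤ M)) with hx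
  have hcomm : ∀ i j, Commute (x i) (x j) := by
    intro i j
    show x i * x j = x j * x i
    rw [hx]
    simp only [Algebra.TensorProduct.tmul_mul_tmul]
    have h1 : ExteriorAlgebra.ι ℤ (c.coord j : Module.Dual ℤ L) * ExteriorAlgebra.ι ℤ (c.coord i)
        = -(ExteriorAlgebra.ι ℤ (c.coord i : Module.Dual ℤ L) * ExteriorAlgebra.ι ℤ (c.coord j)) :=
      eq_neg_of_add_eq_zero_left (by rw [add_comm]; exact ExteriorAlgebra.ι_add_mul_swap _ _)
    have h2 : ExteriorAlgebra.ι ℤ (v.coord j : Module.Dual ℤ M) * ExteriorAlgebra.ι ℤ (v.coord i)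
        = -(ExteriorAlgebra.ι ℤ (v.coord i : Module.Dual ℤ M) * ExteriorAlgebra.ι ℤ (v.coord j)) :=
      eq_neg_of_add_eq_zero_left (by rw [add_comm]; exact ExteriorAlgebra.ι_add_mul_swap _ _)
    rw [h1, h2, TensorProduct.neg_tmul, TensorProduct.tmul_neg, neg_neg]
  have hsq : ∀ k, x k * x k = 0 := by
    intro k
    rw [hx]
    simp only [Algebra.TensorProduct.tmul_mul_tmul, ExteriorAlgebra.ι_sq_zero,
      TensorProduct.zero_tmul]
  haveI : Module.Free ℤ (ExteriorAlgebra ℤ L) := exteriorFree c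
  haveI : Module.Free ℤ (ExteriorAlgebra ℤ M) := exteriorFree v
  haveI hfree : Module.Free ℤ (ExteriorAlgebra ℤ L ⊗[ℤ] ExteriorAlgebra ℤ M) :=
    Module.Free.tensor
  haveI : Module.IsTorsionFree ℤ (ExteriorAlgebra ℤ L ⊗[ℤ] ExteriorAlgebra ℤ M) :=
    inferInstance
  have hNne : ((n.factorial : ℤ)) ≠ 0 := by
    exact_mod_cast n.factorial_ne_zero
  apply smul_right_injective (ExteriorAlgebra ℤ L ⊗[ℤ] ExteriorAlgebra ℤ M) hNne
  show (n.factorial : ℤ) • cap T _ = (n.factorial : ℤ) • _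
  rw [← cap_smul, hT]
  rw [sum_pow_eq x hcomm hsq n, cap_nsmul, cap_sum]
  have hterm : ∀ S ∈ Finset.powersetCard n (Finset.univ : Finset (Fin g)),
      cap (setProd x S) (wedgeSet c Finset.univ ⊗ₜ[ℤ] wedgeSet v Finset.univ)
        = wedgeSet c Sᶜ ⊗ₜ[ℤ] wedgeSet v Sᶜ := fun S _ => cap_setProd c v S
  rw [Finset.sum_congr rfl hterm]
  have hreindex : ∑ S ∈ Finset.powersetCard n (Finset.univ : Finset (Fin g)),
      wedgeSet c Sᶜ ⊗ₜ[ℤ] wedgeSet v Sᶜ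
      = ∑ I ∈ Finset.powersetCard d (Finset.univ : Finset (Fin g)),
          wedgeSet c I ⊗ₜ[ℤ] wedgeSet v I := by
    refine Finset.sum_nbij' (i := fun S => Sᶜ) (j := fun I => Iᶜ) ?_ ?_ ?_ ?_ ?_
    · intro S hS
      rw [Finset.mem_powersetCard_univ] at hS ⊢
      rw [Finset.card_compl, Fintype.card_fin, hS]
      try omega
    · intro I hI
      rw [Finset.mem_powersetCard_univ] at hI ⊢
      rw [Finset.card_compl, Fintype.card_fin, hI]
      try omega
    · intro S _; exact compl_compl S
    · intro I _; exact compl_compl I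
    · intro S _; rfl
  rw [hreindex, Nat.cast_smul_eq_nsmul]
end Main
end PoincareAux



/-- Algebraic Poincaré formula in the model ring: capping the class
`Q^{g−d}/(g−d)!` of the theta divisor, where `Q = Σ_k c_k^* ⊗ v_k^*`, against the
fundamental class `(c_1∧⋯∧c_g) ⊗ (v_1∧⋯∧v_g)` yields
`Σ_{|I|=d} (∧_{k∈I} c_k) ⊗ (∧_{k∈I} v_k)`. -/
theorem algebraic_poincare_formula
    (g d : ℕ) (hd : d ≤ g)
    (L M : Type*) [AddCommGroup L] [Module ℤ L] [AddCommGroup M] [Module ℤ M]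
    (c : Module.Basis (Fin g) ℤ L) (v : Module.Basis (Fin g) ℤ M)
    (T : ExteriorAlgebra ℤ (Module.Dual ℤ L) ⊗[ℤ] ExteriorAlgebra ℤ (Module.Dual ℤ M))
    (hT : ((g - d).factorial : ℤ) • T
      = (∑ k : Fin g, (ExteriorAlgebra.ι ℤ (c.coord k : Module.Dual ℤ L))
          ⊗ₜ[ℤ] (ExteriorAlgebra.ι ℤ (v.coord k : Module.Dual ℤ M))) ^ (g - d)) :
    cap T (wedgeSet c Finset.univ ⊗ₜ[ℤ] wedgeSet v Finset.univ)
      = ∑ I ∈ Finset.powersetCard d (Finset.univ : Finset (Fin g)),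
          wedgeSet c I ⊗ₜ[ℤ] wedgeSet v I :=
  PoincareAux.algebraic_poincare_formula' g d hd L M c v T hT
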